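/- Let G be a plane graph that contains neither K4 nor C5 as a subgraph, with minimum degree δ(G) ≥ 3 and at least 5 vertices, and let B be a triangular block of G isomorphic to B4 (two triangles sharing an edge). Then each of the four boundary edges of B (the edges other than the shared edge) is incident in G to a face of length at least 6, and consequently 15·f(B) − 8·e(B) ≤ 15·(2 + 4/6) − 8·5 = 0. -/

import Mathlib

open SimpleGraph

namespace PlanarTuran

/-- Reversal of darts, as a permutation of the darts of `G`. -/
def dartRev {V : Type*} (G : SimpleGraph V) : Equiv.Perm G.Dart where
  toFun := Dart.symm
  invFun := Dart.symm
  left_inv d := Dart.symm_symm d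
  right_inv d := Dart.symm_symm d

/-- A rotation system (combinatorial embedding) of a simple graph `G`: a permutation of the
darts which fixes the initial vertex of every dart and is a single cycle on the darts leaving
each given vertex. -/
structure RotationSystem {V : Type*} (G : SimpleGraph V) where
  rot : Equiv.Perm G.Dart
  rot_fst : ∀ d : G.Dart, (rot d).fst = d.fst
  rot_cycle : ∀ d d' : G.Dart, d.fst = d'.fst → rot.SameCycle d d'

namespace RotationSystem

variable {V : Type*} {G : SimpleGraph V}

/-- The face permutation of the embedding: its orbits are the faces of the plane graph. -/
def facePerm (R : RotationSystem G) : Equiv.Perm G.Dart :=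
  (dartRev G).trans R.rot

/-- The face containing (the side of) a dart, encoded as the set of darts on its boundary walk. -/
def faceOf (R : RotationSystem G) (d : G.Dart) : Set G.Dart :=
  {d' | R.facePerm.SameCycle d d'}

/-- The length of the face incident to the dart `d`: the number of edge-sides on its
boundary walk (a bridge is counted twice). -/
noncomputable def faceLen (R : RotationSystem G) (d : G.Dart) : ℕ :=
  (R.faceOf d).ncard

/-- Darts lying on the same face. -/
def faceSetoid (R : RotationSystem G) : Setoid G.Dart :=
  ⟨R.facePerm.SameCycle,
   ⟨fun d => Equiv.Perm.SameCycle.refl _ d, fun h => h.symm, fun h h' => h.trans h'⟩⟩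

/-- The number of faces of the embedded graph (only counting faces having at least one edge on
their boundary). -/
noncomputable def numFaces (R : RotationSystem G) : ℕ :=
  Nat.card (Quotient R.faceSetoid)

/-- Darts on the same face, within the connected component `C`. -/
def faceSetoidIn (R : RotationSystem G) (C : G.ConnectedComponent) :
    Setoid {d : G.Dart // G.connectedComponentMk d.fst = C} :=
  ⟨fun d d' => R.facePerm.SameCycle d.1 d'.1,
   ⟨fun d => Equiv.Perm.SameCycle.refl _ _, fun h => h.symm, fun h h' => h.trans h'⟩⟩

/-- The rotation system is a *plane* (genus zero) embedding: every connected component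
containing at least one edge satisfies Euler's formula `n - e + f = 2`
(written here as `2*n + 2*f = 2*e + 4`, where `2*e` is the number of darts). -/
def GenusZero (R : RotationSystem G) : Prop :=
  ∀ C : G.ConnectedComponent, (∃ d : G.Dart, G.connectedComponentMk d.fst = C) →
    2 * Nat.card {v : V // G.connectedComponentMk v = C}
      + 2 * Nat.card (Quotient (R.faceSetoidIn C))
      = Nat.card {d : G.Dart // G.connectedComponentMk d.fst = C} + 4

/-- The contribution `f(e) = 1/l₁ + 1/l₂` of an edge `e` to the face number, where `l₁, l₂`
are the lengths of the faces incident to the two darts of `e` (for a bridge both darts lie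
on the same face, giving `f(e) = 2/l`). -/
noncomputable def fEdge [Fintype V] [DecidableEq V] [DecidableRel G.Adj]
    (R : RotationSystem G) (e : Sym2 V) : ℚ :=
  ∑ d ∈ Finset.univ.filter (fun d : G.Dart => d.edge = e), (1 : ℚ) / (R.faceLen d)

/-- The edges `e₁` and `e₂` both lie on a common `3`-face. -/
def shares3Face (R : RotationSystem G) (e₁ e₂ : Sym2 V) : Prop :=
  ∃ d₁ d₂ : G.Dart, d₁.edge = e₁ ∧ d₂.edge = e₂ ∧ R.faceLen d₁ = 3 ∧
    R.facePerm.SameCycle d₁ d₂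

/-- The triangular block generated by an edge `e`: the closure of `{e}` under adding all
edges of any `3`-face containing an edge already present. -/
def triBlockOf (R : RotationSystem G) (e : Sym2 V) : Set (Sym2 V) :=
  {e' | Relation.ReflTransGen R.shares3Face e e'}

/-- `B` is a triangular block of the plane graph `G`. -/
def IsTriangularBlock (R : RotationSystem G) (B : Set (Sym2 V)) : Prop :=
  ∃ e ∈ G.edgeSet, B = R.triBlockOf e

end RotationSystem

/-- A graph is planar iff it admits a genus-zero rotation system. -/
def _root_.SimpleGraph.IsPlanar {V : Type*} (G : SimpleGraph V) : Prop :=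
  ∃ R : RotationSystem G, R.GenusZero

/-- `G` contains no cycle of length `k`; equivalently, no subgraph isomorphic to `C_k`. -/
def _root_.SimpleGraph.CycleFree {V : Type*} (G : SimpleGraph V) (k : ℕ) : Prop :=
  ∀ ⦃v : V⦄ (w : G.Walk v v), w.IsCycle → w.length ≠ k

/-- A graph is 2-connected if it has at least 3 vertices and deleting any single vertex
leaves it connected. -/
def _root_.SimpleGraph.IsTwoConnected {V : Type*} (G : SimpleGraph V) : Prop :=
  3 ≤ Nat.card V ∧ ∀ v : V, (G.induce {u | u ≠ v}).Connected

/-- The set of vertices covered by a set `B` of edges. -/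
def blockVerts {V : Type*} (B : Set (Sym2 V)) : Set V :=
  {v | ∃ e ∈ B, v ∈ e}

/-- An edge set forming a single edge `K₂`. -/
def IsK2Block {V : Type*} (B : Set (Sym2 V)) : Prop :=
  ∃ u v : V, u ≠ v ∧ B = {s(u, v)}

/-- An edge set forming a triangle `K₃`. -/
def IsK3Block {V : Type*} (B : Set (Sym2 V)) : Prop :=
  ∃ u v w : V, u ≠ v ∧ u ≠ w ∧ v ≠ w ∧ B = {s(u, v), s(v, w), s(u, w)}

/-- An edge set forming `B₄`, two triangles `u v w` and `v w x` sharing the edge `v w`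
(`K₄` minus an edge). -/
def IsB4Block {V : Type*} (B : Set (Sym2 V)) : Prop :=
  ∃ u v w x : V, u ≠ v ∧ u ≠ w ∧ u ≠ x ∧ v ≠ w ∧ v ≠ x ∧ w ≠ x ∧
    B = {s(u, v), s(u, w), s(v, w), s(v, x), s(w, x)}

/-- An edge set forming `B₅ₐ`: a path `x₁x₂x₃x₄` plus an apex `y` joined to all of
`x₁, x₂, x₃, x₄`. -/
def IsB5aBlock {V : Type*} (B : Set (Sym2 V)) : Prop :=
  ∃ y x₁ x₂ x₃ x₄ : V, y ≠ x₁ ∧ y ≠ x₂ ∧ y ≠ x₃ ∧ y ≠ x₄ ∧ x₁ ≠ x₂ ∧ x₁ ≠ x₃ ∧ x₁ ≠ x₄ ∧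
    x₂ ≠ x₃ ∧ x₂ ≠ x₄ ∧ x₃ ≠ x₄ ∧
    B = {s(y, x₁), s(y, x₂), s(y, x₃), s(y, x₄), s(x₁, x₂), s(x₂, x₃), s(x₃, x₄)}

/-- An edge set forming `B₅ᵦ`, the wheel `W₄`: a `4`-cycle `x₁x₂x₃x₄` plus a center `c`
joined to all four cycle vertices. -/
def IsB5bBlock {V : Type*} (B : Set (Sym2 V)) : Prop :=
  ∃ c x₁ x₂ x₃ x₄ : V, c ≠ x₁ ∧ c ≠ x₂ ∧ c ≠ x₃ ∧ c ≠ x₄ ∧ x₁ ≠ x₂ ∧ x₁ ≠ x₃ ∧ x₁ ≠ x₄ ∧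
    x₂ ≠ x₃ ∧ x₂ ≠ x₄ ∧ x₃ ≠ x₄ ∧
    B = {s(c, x₁), s(c, x₂), s(c, x₃), s(c, x₄), s(x₁, x₂), s(x₂, x₃), s(x₃, x₄), s(x₄, x₁)}

end PlanarTuran

open PlanarTuran

section Helpers

open Equiv Equiv.Perm SimpleGraph

variable {α : Type*} [Fintype α] [DecidableEq α]

/-- If `σ^m` fixes `y` with `m > 0`, the cycle of `y` has length at most `m`. -/
lemma PlanarTuran.card_support_cycleOf_le (σ : Equiv.Perm α) (y : α) {m : ℕ} (hm : 0 < m)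
    (h : (σ ^ m) y = y) : (σ.cycleOf y).support.card ≤ m := by
  have hpow : ∀ q : ℕ, ((σ ^ m) ^ q) y = y := by
    intro q
    induction q with
    | zero => simp
    | succ q ih => rw [pow_succ, Equiv.Perm.mul_apply, h, ih]
  have hsub : (σ.cycleOf y).support ⊆ (Finset.range m).image (fun i => (σ ^ i) y) := by
    intro z hz
    rw [Equiv.Perm.mem_support_cycleOf_iff] at hz
    obtain ⟨i, _, rfl⟩ := hz.1.exists_pow_eq'
    refine Finset.mem_image.2 ⟨i % m, Finset.mem_range.2 (Nat.mod_lt _ hm), ?_⟩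
    conv_rhs => rw [← Nat.mod_add_div i m]
    rw [pow_add, Equiv.Perm.mul_apply, pow_mul, hpow]
  calc (σ.cycleOf y).support.card ≤ _ := Finset.card_le_card hsub
    _ ≤ m := (Finset.card_image_le).trans (by simp)

lemma PlanarTuran.pow_three_apply (σ : Equiv.Perm α) (x : α) : (σ ^ 3) x = σ (σ (σ x)) := by
  rw [pow_succ, pow_succ, pow_one, Equiv.Perm.mul_apply, Equiv.Perm.mul_apply]

namespace PlanarTuran

variable {V : Type*} {G : SimpleGraph V}

lemma dart_ext' {d d' : G.Dart} (h1 : d.fst = d'.fst) (h2 : d.snd = d'.snd) : d = d' :=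
  SimpleGraph.Dart.ext _ _ (Prod.ext h1 h2)

lemma no_c5 (hC5 : G.CycleFree 5)
    {a b c d e : V}
    (hab : G.Adj a b) (hbc : G.Adj b c) (hcd : G.Adj c d) (hde : G.Adj d e) (hea : G.Adj e a)
    (hac : a ≠ c) (had : a ≠ d) (hbd : b ≠ d) (hbe : b ≠ e) (hce : c ≠ e) : False := by
  have hw : (SimpleGraph.Walk.cons hab (SimpleGraph.Walk.cons hbc (SimpleGraph.Walk.cons hcd
      (SimpleGraph.Walk.cons hde (SimpleGraph.Walk.cons hea SimpleGraph.Walk.nil))))).IsCycle := by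
    rw [SimpleGraph.Walk.isCycle_def]
    refine ⟨?_, by simp, ?_⟩
    · rw [SimpleGraph.Walk.isTrail_def]
      simp [Sym2.eq_iff, hab.ne, hbc.ne, hcd.ne, hde.ne, hea.ne, hac, had, hbd, hbe, hce,
        hac.symm, had.symm, hbd.symm, hbe.symm, hce.symm, hea.ne', hab.ne', hea.ne]
    · simp [hbc.ne, hcd.ne, hde.ne, hea.ne', hbd, hbe, hce, hac.symm, had.symm, hab.ne', hea.ne]
  exact hC5 _ hw (by simp)

lemma no_k4 [DecidableEq V] (hK4 : G.CliqueFree 4) {a b c d : V}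
    (hab : G.Adj a b) (hac : G.Adj a c) (had : G.Adj a d)
    (hbc : G.Adj b c) (hbd : G.Adj b d) (hcd : G.Adj c d) : False := by
  refine hK4 {a, b, c, d} ?_
  rw [SimpleGraph.isNClique_iff]
  constructor
  · intro p hp q hq hpq
    simp only [Finset.coe_insert, Set.mem_insert_iff, Finset.coe_singleton,
      Set.mem_singleton_iff] at hp hq
    rcases hp with rfl|rfl|rfl|rfl <;> rcases hq with rfl|rfl|rfl|rfl <;>
      first | exact absurd rfl hpq | assumption | (exact hab.symm) | (exact hac.symm) |
        (exact had.symm) | (exact hbc.symm) | (exact hbd.symm) | (exact hcd.symm)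
  · have h1 := hab.ne; have h2 := hac.ne; have h3 := had.ne; have h4 := hbc.ne
    have h5 := hbd.ne; have h6 := hcd.ne
    rw [Finset.card_insert_of_notMem (by simp_all), Finset.card_insert_of_notMem (by simp_all),
      Finset.card_insert_of_notMem (by simp_all), Finset.card_singleton]

/-- With minimum degree `3`, there is a dart at `v` avoiding two given heads. -/
lemma exists_dart_extra [Fintype V] [DecidableEq V] [DecidableRel G.Adj]
    (hdeg : ∀ v : V, 3 ≤ G.degree v) (v s t : V) :
    ∃ r : G.Dart, r.fst = v ∧ r.snd ≠ s ∧ r.snd ≠ t := by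
  have hcard : 0 < ((G.neighborFinset v) \ {s, t}).card := by
    have h1 := Finset.le_card_sdiff ({s, t} : Finset V) (G.neighborFinset v)
    have h2 : ({s, t} : Finset V).card ≤ 2 := Finset.card_insert_le _ _ |>.trans (by simp)
    have h3 := hdeg v
    rw [SimpleGraph.degree] at h3
    omega
  obtain ⟨y, hy⟩ := Finset.card_pos.1 hcard
  rw [Finset.mem_sdiff, SimpleGraph.mem_neighborFinset] at hy
  simp only [Finset.mem_insert, Finset.mem_singleton, not_or] at hy
  exact ⟨⟨(v, y), hy.1⟩, rfl, hy.2.1, hy.2.2⟩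

namespace RotationSystem

variable [Fintype V] [DecidableEq V] [DecidableRel G.Adj] (R : RotationSystem G)

lemma facePerm_apply (d : G.Dart) : R.facePerm d = R.rot d.symm := rfl

lemma fst_facePerm (d : G.Dart) : (R.facePerm d).fst = d.snd := by
  rw [facePerm_apply, R.rot_fst]
  simp [SimpleGraph.Dart.symm]

lemma facePerm_ne (d : G.Dart) : R.facePerm d ≠ d := by
  intro h
  exact d.fst_ne_snd (by rw [← R.fst_facePerm d, h])

lemma rot_fix (hdeg : ∀ v : V, 3 ≤ G.degree v) {p : G.Dart} (h : R.rot p = p) : False := by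
  have hall : ∀ r : G.Dart, r.fst = p.fst → r = p := by
    intro r hr
    obtain ⟨k, hk⟩ := R.rot_cycle p r hr.symm
    rw [← hk]
    exact (Function.IsFixedPt.perm_zpow h k :)
  obtain ⟨r, hr, h1, _⟩ := exists_dart_extra hdeg p.fst p.snd p.snd
  exact h1 (by rw [hall r hr])

lemma rot_two (hdeg : ∀ v : V, 3 ≤ G.degree v) {p q : G.Dart}
    (h1 : R.rot p = q) (h2 : R.rot q = p) : False := by
  have hfst : q.fst = p.fst := by rw [← h1]; exact R.rot_fst p
  have key : ∀ k : ℤ, ((R.rot^k) p = p ∧ (R.rot^k) q = q) ∨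
      ((R.rot^k) p = q ∧ (R.rot^k) q = p) := by
    intro k
    induction k using Int.induction_on with
    | zero => left; simp
    | succ i ih =>
        have e1 : (R.rot^((i:ℤ)+1)) p = (R.rot^(i:ℤ)) q := by
          rw [zpow_add_one, Equiv.Perm.mul_apply, h1]
        have e2 : (R.rot^((i:ℤ)+1)) q = (R.rot^(i:ℤ)) p := by
          rw [zpow_add_one, Equiv.Perm.mul_apply, h2]
        rcases ih with ⟨hp1, hp2⟩ | ⟨hp1, hp2⟩
        · right; exact ⟨by rw [e1, hp2], by rw [e2, hp1]⟩
        · left; exact ⟨by rw [e1, hp2], by rw [e2, hp1]⟩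
    | pred i ih =>
        have i1 : R.rot⁻¹ p = q := by rw [← h2]; simp
        have i2 : R.rot⁻¹ q = p := by rw [← h1]; simp
        have e1 : (R.rot^(-(i:ℤ)-1)) p = (R.rot^(-(i:ℤ))) q := by
          rw [zpow_sub_one, Equiv.Perm.mul_apply, i1]
        have e2 : (R.rot^(-(i:ℤ)-1)) q = (R.rot^(-(i:ℤ))) p := by
          rw [zpow_sub_one, Equiv.Perm.mul_apply, i2]
        rcases ih with ⟨hp1, hp2⟩ | ⟨hp1, hp2⟩
        · right; exact ⟨by rw [e1, hp2], by rw [e2, hp1]⟩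
        · left; exact ⟨by rw [e1, hp2], by rw [e2, hp1]⟩
  obtain ⟨r, hr, hs1, hs2⟩ := exists_dart_extra hdeg p.fst p.snd q.snd
  obtain ⟨k, hk⟩ := R.rot_cycle p r hr.symm
  rcases key k with ⟨hk1, _⟩ | ⟨hk1, _⟩
  · exact hs1 (by rw [← hk, hk1])
  · exact hs2 (by rw [← hk, hk1])

lemma facePerm_ne_symm (hdeg : ∀ v : V, 3 ≤ G.degree v) (d : G.Dart) :
    R.facePerm d ≠ d.symm := by
  intro h
  rw [facePerm_apply] at h
  exact R.rot_fix hdeg h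

lemma faceOf_eq_support (d : G.Dart) :
    R.faceOf d = ↑(R.facePerm.cycleOf d).support := by
  ext d'
  simp only [faceOf, Set.mem_setOf_eq, Finset.coe_sort_coe, Finset.mem_coe,
    Equiv.Perm.mem_support_cycleOf_iff]
  exact ⟨fun h => ⟨h, Equiv.Perm.mem_support.2 (R.facePerm_ne d)⟩, fun h => h.1⟩

lemma faceLen_eq (d : G.Dart) :
    R.faceLen d = ((R.facePerm.cycleOf d).support).card := by
  rw [faceLen, faceOf_eq_support, Set.ncard_coe_finset]

lemma faceLen_pos (d : G.Dart) : 0 < R.faceLen d := by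
  rw [faceLen_eq]
  refine Finset.card_pos.2 ⟨d, ?_⟩
  rw [Equiv.Perm.mem_support_cycleOf_iff]
  exact ⟨Equiv.Perm.SameCycle.refl _ _, Equiv.Perm.mem_support.2 (R.facePerm_ne d)⟩

lemma pow_faceLen (d : G.Dart) : (R.facePerm ^ R.faceLen d) d = d := by
  have h := Equiv.Perm.pow_mod_card_support_cycleOf_self_apply R.facePerm
    ((R.facePerm.cycleOf d).support.card) d
  rw [Nat.mod_self, pow_zero] at h
  rw [faceLen_eq]
  exact h.symm

lemma sameCycle_pow (d : G.Dart) (i : ℕ) :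
    R.facePerm.SameCycle d ((R.facePerm^i) d) := ⟨(i : ℤ), by rw [zpow_natCast]⟩

lemma faceLen_congr {d d' : G.Dart} (h : R.facePerm.SameCycle d d') :
    R.faceLen d = R.faceLen d' := by
  rw [faceLen_eq, faceLen_eq, h.cycleOf_eq]

lemma exists_lt_pow {d d' : G.Dart} (h : R.facePerm.SameCycle d d') :
    ∃ i, i < R.faceLen d ∧ (R.facePerm^i) d = d' := by
  obtain ⟨i, _, rfl⟩ := h.exists_pow_eq'
  refine ⟨i % R.faceLen d, Nat.mod_lt _ (R.faceLen_pos d), ?_⟩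
  rw [faceLen_eq]
  exact Equiv.Perm.pow_mod_card_support_cycleOf_self_apply R.facePerm i d

lemma iter_ne {d : G.Dart} {i j : ℕ} (hij : i < j) (hj : j < R.faceLen d) :
    (R.facePerm^i) d ≠ (R.facePerm^j) d := by
  intro h
  have h2 : (R.facePerm^(j-i)) ((R.facePerm^i) d) = (R.facePerm^i) d := by
    rw [← Equiv.Perm.mul_apply, ← pow_add, Nat.sub_add_cancel hij.le]
    exact h.symm
  have hle := PlanarTuran.card_support_cycleOf_le R.facePerm ((R.facePerm^i) d)
    (m := j - i) (by omega) h2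
  have hco := R.faceLen_congr (R.sameCycle_pow d i)
  rw [faceLen_eq (d := (R.facePerm^i) d)] at hco
  omega

lemma faceLen_ge_three (hdeg : ∀ v : V, 3 ≤ G.degree v) (d : G.Dart) :
    3 ≤ R.faceLen d := by
  have hpos := R.faceLen_pos d
  have h1 : R.faceLen d ≠ 1 := by
    intro h
    have := R.pow_faceLen d
    rw [h, pow_one] at this
    exact R.facePerm_ne d this
  have h2 : R.faceLen d ≠ 2 := by
    intro h
    have hh := R.pow_faceLen d
    rw [h, pow_succ, pow_one, Equiv.Perm.mul_apply] at hh
    have hsymm : R.facePerm d = d.symm := by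
      refine dart_ext' ?_ ?_
      · rw [R.fst_facePerm d]; simp [SimpleGraph.Dart.symm]
      · have := R.fst_facePerm (R.facePerm d)
        rw [hh] at this
        rw [← this]; simp [SimpleGraph.Dart.symm]
    exact R.facePerm_ne_symm hdeg d hsymm
  omega

/-- Structure of a face of length 3. -/
lemma tri (hdeg : ∀ v : V, 3 ≤ G.degree v) {d : G.Dart} (h3 : R.faceLen d = 3) :
    R.facePerm (R.facePerm (R.facePerm d)) = d ∧
    (R.facePerm (R.facePerm d)).snd = d.fst ∧
    (R.facePerm d).snd ≠ d.fst ∧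
    (∀ d', R.facePerm.SameCycle d d' → d' = d ∨ d' = R.facePerm d ∨
      d' = R.facePerm (R.facePerm d)) := by
  have hcube : R.facePerm (R.facePerm (R.facePerm d)) = d := by
    have := R.pow_faceLen d
    rw [h3] at this
    rw [← pow_three_apply]
    exact this
  refine ⟨hcube, ?_, ?_, ?_⟩
  · have := R.fst_facePerm (R.facePerm (R.facePerm d))
    rw [hcube] at this
    exact this.symm ▸ rfl
  · intro h
    have hsymm : R.facePerm d = d.symm := by
      refine dart_ext' ?_ ?_
      · rw [R.fst_facePerm d]; simp [SimpleGraph.Dart.symm]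
      · rw [h]; simp [SimpleGraph.Dart.symm]
    exact R.facePerm_ne_symm hdeg d hsymm
  · intro d' hsc
    obtain ⟨i, hi, rfl⟩ := R.exists_lt_pow hsc
    rw [h3] at hi
    interval_cases i
    · left; simp
    · right; left; simp [pow_one]
    · right; right
      rw [pow_succ, pow_one, Equiv.Perm.mul_apply]

end RotationSystem

end PlanarTuran

end Helpers

lemma PlanarTuran.pow_four_apply {α : Type*} (σ : Equiv.Perm α) (x : α) :
    (σ ^ 4) x = σ (σ (σ (σ x))) := by
  rw [pow_succ, Equiv.Perm.mul_apply, pow_succ, Equiv.Perm.mul_apply, pow_succ,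
    Equiv.Perm.mul_apply, pow_one]

lemma PlanarTuran.pow_five_apply {α : Type*} (σ : Equiv.Perm α) (x : α) :
    (σ ^ 5) x = σ (σ (σ (σ (σ x)))) := by
  rw [pow_succ, Equiv.Perm.mul_apply, pow_succ, Equiv.Perm.mul_apply, pow_succ,
    Equiv.Perm.mul_apply, pow_succ, Equiv.Perm.mul_apply, pow_one]

namespace PlanarTuran
namespace RotationSystem

variable {V : Type*} {G : SimpleGraph V}

/-- The mirror image of a rotation system. -/
def mirror (R : RotationSystem G) : RotationSystem G where
  rot := R.rot⁻¹
  rot_fst d := by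
    have := R.rot_fst (R.rot⁻¹ d)
    rw [← Equiv.Perm.mul_apply, mul_inv_cancel, Equiv.Perm.one_apply] at this
    exact this.symm
  rot_cycle d d' h := (Equiv.Perm.sameCycle_inv).2 (R.rot_cycle d d' h)

variable [Fintype V] [DecidableEq V] [DecidableRel G.Adj] (R : RotationSystem G)

lemma dartRev_inv_apply (d : G.Dart) : (dartRev G)⁻¹ d = d.symm := rfl

lemma mirror_facePerm :
    (mirror R).facePerm = (dartRev G) * R.facePerm⁻¹ * (dartRev G)⁻¹ := Equiv.ext fun d => by
  have h1 : (mirror R).facePerm d = R.rot⁻¹ d.symm := rfl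
  have h2 : ((dartRev G) * R.facePerm⁻¹ * (dartRev G)⁻¹) d
      = ((R.facePerm⁻¹ d.symm)).symm := rfl
  have h3 : R.facePerm⁻¹ d.symm = (R.rot⁻¹ d.symm).symm := rfl
  rw [h1, h2, h3, SimpleGraph.Dart.symm_symm]

lemma mirror_sameCycle {d d' : G.Dart} :
    (mirror R).facePerm.SameCycle d d' ↔ R.facePerm.SameCycle d.symm d'.symm := by
  rw [mirror_facePerm, Equiv.Perm.sameCycle_conj, Equiv.Perm.sameCycle_inv,
    dartRev_inv_apply, dartRev_inv_apply]

lemma mirror_faceOf (d : G.Dart) :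
    (mirror R).faceOf d = SimpleGraph.Dart.symm '' (R.faceOf d.symm) := by
  ext d'
  simp only [faceOf, Set.mem_setOf_eq, Set.mem_image, mirror_sameCycle]
  constructor
  · intro h
    exact ⟨d'.symm, h, SimpleGraph.Dart.symm_symm d'⟩
  · rintro ⟨y, hy, rfl⟩
    rwa [SimpleGraph.Dart.symm_symm]

lemma mirror_faceLen (d : G.Dart) : (mirror R).faceLen d = R.faceLen d.symm := by
  rw [faceLen, faceLen, mirror_faceOf,
    Set.ncard_image_of_injective _ SimpleGraph.Dart.symm_involutive.injective]

lemma mirror_shares3Face (e₁ e₂ : Sym2 V) :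
    (mirror R).shares3Face e₁ e₂ ↔ R.shares3Face e₁ e₂ := by
  constructor
  · rintro ⟨d₁, d₂, h₁, h₂, h3, hsc⟩
    exact ⟨d₁.symm, d₂.symm, by rw [SimpleGraph.Dart.edge_symm, h₁],
      by rw [SimpleGraph.Dart.edge_symm, h₂],
      by rw [← mirror_faceLen, h3], (mirror_sameCycle R).1 hsc⟩
  · rintro ⟨d₁, d₂, h₁, h₂, h3, hsc⟩
    refine ⟨d₁.symm, d₂.symm, by rw [SimpleGraph.Dart.edge_symm, h₁],
      by rw [SimpleGraph.Dart.edge_symm, h₂],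
      by rw [mirror_faceLen, SimpleGraph.Dart.symm_symm, h3], ?_⟩
    rw [mirror_sameCycle, SimpleGraph.Dart.symm_symm, SimpleGraph.Dart.symm_symm]
    exact hsc

lemma mirror_triBlockOf (e : Sym2 V) : (mirror R).triBlockOf e = R.triBlockOf e := by
  ext e'
  exact ⟨fun h => Relation.ReflTransGen.mono (fun a b h => (mirror_shares3Face R a b).1 h) _ _ h,
    fun h => Relation.ReflTransGen.mono (fun a b h => (mirror_shares3Face R a b).2 h) _ _ h⟩

end RotationSystem
end PlanarTuran

namespace PlanarTuran

open SimpleGraph Equiv.Perm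

variable {V : Type*} [Fintype V] [DecidableEq V] {G : SimpleGraph V} [DecidableRel G.Adj]

lemma RotationSystem.sameCycle_apply (R : RotationSystem G) {d d' : G.Dart}
    (h : R.facePerm.SameCycle d d') : R.facePerm.SameCycle d (R.facePerm d') :=
  h.trans ⟨1, by rw [zpow_one]⟩

lemma edge_eq {G : SimpleGraph V} (d : G.Dart) : d.edge = s(d.fst, d.snd) := rfl

lemma key_oriented (R : RotationSystem G)
    (hK4 : G.CliqueFree 4) (hC5 : G.CycleFree 5) (hdeg : ∀ v : V, 3 ≤ G.degree v)
    (B : Set (Sym2 V))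
    (hBcl : ∀ e' ∈ B, ∀ e'', R.shares3Face e' e'' → e'' ∈ B)
    (hBface : ∀ e' ∈ B, ∃ d : G.Dart, d.edge = e' ∧ R.faceLen d = 3)
    (u v w x : V)
    (h₁ : u ≠ v) (h₂ : u ≠ w) (h₃ : u ≠ x) (h₄ : v ≠ w) (h₅ : v ≠ x) (h₆ : w ≠ x)
    (hBeq : B = {s(u, v), s(u, w), s(v, w), s(v, x), s(w, x)})
    (duv : G.Dart) (hduv : duv.toProd = (u, v)) (hduv3 : R.faceLen duv = 3) :
    ∃ d : G.Dart, d.edge = s(u,v) ∧ 6 ≤ R.faceLen d := by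
  have scstep : ∀ {d d' : G.Dart}, R.facePerm.SameCycle d d' →
      R.facePerm.SameCycle d (R.facePerm d') := fun h => R.sameCycle_apply h
  have hduvf : duv.fst = u := by rw [show duv.fst = duv.toProd.1 from rfl, hduv]
  have hduvs : duv.snd = v := by rw [show duv.snd = duv.toProd.2 from rfl, hduv]
  have hduve : duv.edge = s(u, v) := by rw [edge_eq, hduvf, hduvs]
  have huvB : s(u, v) ∈ B := by rw [hBeq]; left; rfl
  have hvxB : s(v, x) ∈ B := by rw [hBeq]; right; right; right; left; rfl
  have hvuB : s(v, u) ∈ B := by rw [Sym2.eq_swap]; exact huvB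
  -- the triangle structure of the face of duv
  obtain ⟨hc3, hsnd2, hne2, hmem1⟩ := R.tri hdeg hduv3
  obtain ⟨dvw, hdvw_def⟩ : ∃ d, d = R.facePerm duv := ⟨_, rfl⟩
  obtain ⟨dwu, hdwu_def⟩ : ∃ d, d = R.facePerm dvw := ⟨_, rfl⟩
  have hsc_duv_dvw : R.facePerm.SameCycle duv dvw := by
    rw [hdvw_def]; exact scstep (SameCycle.refl _ _)
  have hsc_duv_dwu : R.facePerm.SameCycle duv dwu := by
    rw [hdwu_def]; exact scstep hsc_duv_dvw
  have hdvwf : dvw.fst = v := by rw [hdvw_def, R.fst_facePerm, hduvs]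
  have hdvwB : dvw.edge ∈ B := hBcl _ huvB _ ⟨duv, dvw, hduve, rfl, hduv3, hsc_duv_dvw⟩
  have hdvw_ne_u : dvw.snd ≠ u := by rw [← hduvf, hdvw_def]; exact hne2
  have hdwus : dwu.snd = u := by rw [hdwu_def, hdvw_def, hsnd2, hduvf]
  have hdvws : dvw.snd = w := by
    by_cases hcw : dvw.snd = w
    · exact hcw
    · exfalso
      by_cases hcx : dvw.snd = x
      · -- then dwu = x -> u, edge s(x,u) ∈ B, impossible
        have hdwuf : dwu.fst = x := by rw [hdwu_def, R.fst_facePerm, hcx]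
        have hdwuB : dwu.edge ∈ B := hBcl _ huvB _ ⟨duv, dwu, hduve, rfl, hduv3, hsc_duv_dwu⟩
        rw [edge_eq, hdwuf, hdwus, hBeq] at hdwuB
        simp only [Set.mem_insert_iff, Set.mem_singleton_iff, Sym2.eq_iff] at hdwuB
        rcases hdwuB with (⟨e1,e2⟩|⟨e1,e2⟩)|(⟨e1,e2⟩|⟨e1,e2⟩)|(⟨e1,e2⟩|⟨e1,e2⟩)|
          (⟨e1,e2⟩|⟨e1,e2⟩)|(⟨e1,e2⟩|⟨e1,e2⟩) <;> first
          | exact h₁ e2.symm | exact h₂ e2.symm | exact h₃ e1.symm | exact h₅ e1.symm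
          | exact h₆ e1.symm | exact h₃ (e1.symm.trans e2) | exact h₄ e2.symm
          | exact h₅ e2.symm | exact h₆ e2.symm | exact h₂ (e2.symm.trans e1).symm
          | exact h₅.symm e1 | exact h₆.symm e1 | exact h₁ (e2.trans e1.symm).symm
          | exact h₃ e2 | exact h₃ (e2.trans e1.symm) | exact h₂ e2 | exact h₁ e2
          | exact h₄ e1 | exact h₅ e1 | exact h₆ e1 | exact h₄ e1.symm
      · rw [edge_eq, hdvwf, hBeq] at hdvwB
        simp only [Set.mem_insert_iff, Set.mem_singleton_iff, Sym2.eq_iff] at hdvwB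
        rcases hdvwB with (⟨e1,e2⟩|⟨e1,e2⟩)|(⟨e1,e2⟩|⟨e1,e2⟩)|(⟨e1,e2⟩|⟨e1,e2⟩)|
          (⟨e1,e2⟩|⟨e1,e2⟩)|(⟨e1,e2⟩|⟨e1,e2⟩) <;> first
          | exact h₁ e1.symm | exact h₄ e1 | exact h₅ e1 | exact hdvw_ne_u e2
          | exact hcw e2 | exact hcx e2 | exact h₄ (e1.trans e2.symm)
          | exact hcw e1 | exact hcx e1 | exact h₁ (e1.trans e2).symm
          | exact hdvw_ne_u e1 | exact h₄ e2 | exact h₅ e2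
  have hdwuf : dwu.fst = w := by rw [hdwu_def, R.fst_facePerm, hdvws]
  have hdvwp : dvw.toProd = (v, w) := Prod.ext hdvwf hdvws
  have hdwup : dwu.toProd = (w, u) := Prod.ext hdwuf hdwus
  have adj_uv : G.Adj u v := by have := duv.adj; rwa [hduvf, hduvs] at this
  have adj_vw : G.Adj v w := by have := dvw.adj; rwa [hdvwf, hdvws] at this
  have adj_wu : G.Adj w u := by have := dwu.adj; rwa [hdwuf, hdwus] at this
  -- the triangle structure of the face of the edge vx
  obtain ⟨p, hpe, hp3⟩ := hBface _ hvxB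
  obtain ⟨pc3, psnd2, pne2, pmem2⟩ := R.tri hdeg hp3
  have hscp1 : R.facePerm.SameCycle p (R.facePerm p) := scstep (SameCycle.refl _ _)
  have hscp2 : R.facePerm.SameCycle p (R.facePerm (R.facePerm p)) := scstep hscp1
  have hptp : p.toProd = (v, x) := by
    rcases (SimpleGraph.dart_edge_eq_mk'_iff).1 hpe with h | h
    · exact h
    · exfalso
      -- p = x -> v ; consider q = F p, q.fst = v
      replace h : p.toProd = (x, v) := h.trans rfl
      have hpf : p.fst = x := by rw [show p.fst = p.toProd.1 from rfl, h]
      have hps : p.snd = v := by rw [show p.snd = p.toProd.2 from rfl, h]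
      have hqf : (R.facePerm p).fst = v := by rw [R.fst_facePerm, hps]
      have hq_ne_x : (R.facePerm p).snd ≠ x := by rw [← hpf]; exact pne2
      have hq_ne_v : (R.facePerm p).snd ≠ v := fun he =>
        (R.facePerm p).fst_ne_snd (hqf.trans he.symm)
      have hqB : (R.facePerm p).edge ∈ B := hBcl _ hvxB _ ⟨p, _, hpe, rfl, hp3, hscp1⟩
      by_cases hqu : (R.facePerm p).snd = u
      · -- F² p = u -> x, edge s(u,x) ∈ B, impossible
        have hq2f : (R.facePerm (R.facePerm p)).fst = u := by rw [R.fst_facePerm, hqu]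
        have hq2s : (R.facePerm (R.facePerm p)).snd = x := by rw [psnd2, hpf]
        have hq2B : (R.facePerm (R.facePerm p)).edge ∈ B :=
          hBcl _ hvxB _ ⟨p, _, hpe, rfl, hp3, hscp2⟩
        rw [edge_eq, hq2f, hq2s, hBeq] at hq2B
        simp only [Set.mem_insert_iff, Set.mem_singleton_iff, Sym2.eq_iff] at hq2B
        rcases hq2B with (⟨e1,e2⟩|⟨e1,e2⟩)|(⟨e1,e2⟩|⟨e1,e2⟩)|(⟨e1,e2⟩|⟨e1,e2⟩)|
          (⟨e1,e2⟩|⟨e1,e2⟩)|(⟨e1,e2⟩|⟨e1,e2⟩) <;> first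
          | exact h₅ e2.symm | exact h₆ e2.symm | exact h₃ e2 | exact h₁ e1.symm
          | exact h₂ e1.symm | exact h₃ e1 | exact h₄ e1.symm | exact h₅ e1.symm
          | exact h₁ e2 | exact h₂ e2 | exact h₄ e2.symm | exact h₆ e1.symm
          | exact h₃ (e1.trans e2.symm) | exact h₃ (e2.symm.trans e1)
          | exact h₁ e1 | exact h₂ e1 | exact h₅ e1 | exact h₆ e2 | exact h₅ e2
          | exact h₅ e1.symm | exact h₆ e1.symm | exact h₅ e2.symm | exact h₆ e2.symm
          | exact h₁ e2.symm | exact h₂ e2.symm | exact h₆ e1 | exact h₁ e2 | exact h₂ e2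
      · by_cases hqw : (R.facePerm p).snd = w
        · -- F p = v -> w = dvw, so p is on the face of duv: contradiction
          have hq_eq : R.facePerm p = dvw :=
            dart_ext' (hqf.trans hdvwf.symm) (hqw.trans hdvws.symm)
          have hsc : R.facePerm.SameCycle duv p :=
            hsc_duv_dvw.trans (hq_eq ▸ hscp1).symm
          rcases hmem1 p hsc with he | he | he
          · rw [he, hduv] at h; injection h with e1 _; exact h₃ e1
          · rw [he, ← hdvw_def, hdvwp] at h; injection h with e1 _; exact h₅ e1
          · rw [he, ← hdvw_def, ← hdwu_def, hdwup] at h; injection h with e1 _; exact h₆ e1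
        · rw [edge_eq, hqf, hBeq] at hqB
          simp only [Set.mem_insert_iff, Set.mem_singleton_iff, Sym2.eq_iff] at hqB
          rcases hqB with (⟨e1,e2⟩|⟨e1,e2⟩)|(⟨e1,e2⟩|⟨e1,e2⟩)|(⟨e1,e2⟩|⟨e1,e2⟩)|
            (⟨e1,e2⟩|⟨e1,e2⟩)|(⟨e1,e2⟩|⟨e1,e2⟩) <;> first
            | exact h₁ e1.symm | exact h₄ e1 | exact h₅ e1 | exact hqu e2
            | exact hqw e2 | exact hq_ne_x e2 | exact h₄ (e1.trans e2.symm)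
            | exact hqw e1 | exact hq_ne_x e1 | exact h₁ (e1.trans e2).symm
            | exact hq_ne_v e2 | exact hq_ne_v e1 | exact h₄ e2 | exact h₅ e2
  obtain ⟨dvx, hdvx_def⟩ : ∃ d, d = p := ⟨_, rfl⟩
  obtain ⟨dxw, hdxw_def⟩ : ∃ d, d = R.facePerm p := ⟨_, rfl⟩
  obtain ⟨dwv, hdwv_def⟩ : ∃ d, d = R.facePerm (R.facePerm p) := ⟨_, rfl⟩
  have hdvxf : dvx.fst = v := by rw [hdvx_def, show p.fst = p.toProd.1 from rfl, hptp]
  have hdvxs : dvx.snd = x := by rw [hdvx_def, show p.snd = p.toProd.2 from rfl, hptp]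
  have hdxwf : dxw.fst = x := by rw [hdxw_def, R.fst_facePerm, ← hdvx_def, hdvxs]
  have hdxw_ne_v : dxw.snd ≠ v := by rw [← hdvxf, hdvx_def, hdxw_def]; exact pne2
  have hdxwB : dxw.edge ∈ B := by
    rw [hdxw_def]; exact hBcl _ hvxB _ ⟨p, _, hpe, rfl, hp3, hscp1⟩
  have hdxws : dxw.snd = w := by
    by_cases hcw : dxw.snd = w
    · exact hcw
    · exfalso
      rw [edge_eq, hdxwf, hBeq] at hdxwB
      simp only [Set.mem_insert_iff, Set.mem_singleton_iff, Sym2.eq_iff] at hdxwB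
      rcases hdxwB with (⟨e1,e2⟩|⟨e1,e2⟩)|(⟨e1,e2⟩|⟨e1,e2⟩)|(⟨e1,e2⟩|⟨e1,e2⟩)|
        (⟨e1,e2⟩|⟨e1,e2⟩)|(⟨e1,e2⟩|⟨e1,e2⟩) <;> first
        | exact h₃ e1.symm | exact h₅ e1.symm | exact h₆ e1.symm | exact hdxw_ne_v e2
        | exact hcw e2 | exact h₅ (e1.symm.trans e2).symm | exact hcw e1
        | exact hdxw_ne_v e1 | exact h₆ (e1.symm.trans e2).symm
        | exact h₃ (e2.trans e1.symm).symm | exact h₃ e2 | exact h₅ e2 | exact h₆ e2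
        | exact h₃ e1 | exact h₅ e1 | exact h₆ e1
  have hdwvf : dwv.fst = w := by rw [hdwv_def, R.fst_facePerm, ← hdxw_def, hdxws]
  have hdwvs : dwv.snd = v := by rw [hdwv_def, psnd2, ← hdvx_def, hdvxf]
  have hdwvp : dwv.toProd = (w, v) := Prod.ext hdwvf hdwvs
  have hsc_dvx_dwv : R.facePerm.SameCycle dvx dwv := by rw [hdvx_def, hdwv_def]; exact hscp2
  have adj_vx : G.Adj v x := by have := dvx.adj; rwa [hdvxf, hdvxs] at this
  have adj_xw : G.Adj x w := by have := dxw.adj; rwa [hdxwf, hdxws] at this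
  -- the candidate dart ds = (v,u)
  obtain ⟨ds, hds_def⟩ : ∃ d, d = duv.symm := ⟨_, rfl⟩
  have hdsp : ds.toProd = (v, u) := by
    rw [hds_def, SimpleGraph.Dart.symm_toProd, hduv]; rfl
  have hdsf : ds.fst = v := by rw [show ds.fst = ds.toProd.1 from rfl, hdsp]
  have hdss : ds.snd = u := by rw [show ds.snd = ds.toProd.2 from rfl, hdsp]
  have hdse : ds.edge = s(u, v) := by rw [edge_eq, hdsf, hdss, Sym2.eq_swap]
  have hdse' : ds.edge = s(v, u) := by rw [edge_eq, hdsf, hdss]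
  have hnot1 : ¬ R.facePerm.SameCycle duv ds := by
    intro hsc
    rcases hmem1 ds hsc with he | he | he
    · rw [he, hduv] at hdsp; injection hdsp with e1 _; exact h₁ e1
    · rw [he, ← hdvw_def, hdvwp] at hdsp; injection hdsp with _ e2; exact h₂ (e2.symm)
    · rw [he, ← hdvw_def, ← hdwu_def, hdwup] at hdsp; injection hdsp with e1 _; exact h₄ (e1.symm)
  have hnot2 : ¬ R.facePerm.SameCycle dvx ds := by
    rw [hdvx_def]
    intro hsc
    rcases pmem2 ds hsc with he | he | he
    · rw [he, hptp] at hdsp; injection hdsp with _ e2; exact h₃ (e2.symm)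
    · rw [he, ← hdxw_def, show dxw.toProd = (x, w) from Prod.ext hdxwf hdxws] at hdsp
      injection hdsp with e1 _; exact h₅ e1.symm
    · rw [he, ← hdwv_def, hdwvp] at hdsp; injection hdsp with e1 _; exact h₄ (e1.symm)
  -- general facts about the face walk of ds
  obtain ⟨g1, hg1_def⟩ : ∃ d, d = R.facePerm ds := ⟨_, rfl⟩
  have hg1f : g1.fst = u := by rw [hg1_def, R.fst_facePerm, hdss]
  have hsc_ds_g1 : R.facePerm.SameCycle ds g1 := by
    rw [hg1_def]; exact scstep (SameCycle.refl _ _)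
  have adj_u_a1 : G.Adj u g1.snd := by have := g1.adj; rwa [hg1f] at this
  have ha1u : g1.snd ≠ u := fun he => g1.fst_ne_snd (hg1f.trans he.symm)
  have ha1v : g1.snd ≠ v := by
    intro he
    have hg1eq : g1 = duv := dart_ext' (hg1f.trans hduvf.symm) (he.trans hduvs.symm)
    rw [hg1eq] at hsc_ds_g1
    exact hnot1 hsc_ds_g1.symm
  have ha1w : g1.snd ≠ w := by
    intro he
    have hg1eq : g1 = dwu.symm := by
      apply SimpleGraph.Dart.ext
      rw [SimpleGraph.Dart.symm_toProd, hdwup]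
      exact Prod.ext hg1f he
    have hrot1 : R.rot duv = dwu.symm := by
      have : ds.symm = duv := by rw [hds_def, SimpleGraph.Dart.symm_symm]
      rw [← this, ← R.facePerm_apply, ← hg1_def, hg1eq]
    have hrot2 : R.rot dwu.symm = duv := by
      rw [← R.facePerm_apply, hdwu_def, hdvw_def]
      exact hc3
    exact R.rot_two hdeg hrot1 hrot2
  have ha1x : g1.snd ≠ x := by
    intro he
    have adj_ux : G.Adj u x := by rw [← he]; exact adj_u_a1
    exact no_k4 hK4 adj_uv adj_wu.symm adj_ux adj_vw adj_vx adj_xw.symm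
  refine ⟨ds, hdse, ?_⟩
  by_contra hlt
  push_neg at hlt
  have h3n := R.faceLen_ge_three hdeg ds
  have hcases : R.faceLen ds = 3 ∨ R.faceLen ds = 4 ∨ R.faceLen ds = 5 := by omega
  rcases hcases with hn | hn | hn
  -- faceLen ds = 3
  · have hg1B : g1.edge ∈ B := by
      rw [hg1_def]
      exact hBcl _ hvuB _ ⟨ds, _, hdse', rfl, hn, scstep (SameCycle.refl _ _)⟩
    rw [edge_eq, hg1f, hBeq] at hg1B
    simp only [Set.mem_insert_iff, Set.mem_singleton_iff, Sym2.eq_iff] at hg1B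
    rcases hg1B with (⟨e1,e2⟩|⟨e1,e2⟩)|(⟨e1,e2⟩|⟨e1,e2⟩)|(⟨e1,e2⟩|⟨e1,e2⟩)|
      (⟨e1,e2⟩|⟨e1,e2⟩)|(⟨e1,e2⟩|⟨e1,e2⟩) <;> first
      | exact ha1v e2 | exact h₁ e1 | exact ha1w e2 | exact h₂ e1 | exact h₃ e1
      | exact ha1x e2 | exact ha1u e2 | exact ha1w e1 | exact ha1x e1 | exact ha1v e1
  -- faceLen ds = 4
  · obtain ⟨g2, hg2_def⟩ : ∃ d, d = R.facePerm g1 := ⟨_, rfl⟩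
    obtain ⟨g3, hg3_def⟩ : ∃ d, d = R.facePerm g2 := ⟨_, rfl⟩
    have h4 := R.pow_faceLen ds
    rw [hn, pow_four_apply, ← hg1_def, ← hg2_def, ← hg3_def] at h4
    have hsc_ds_g2 : R.facePerm.SameCycle ds g2 := by rw [hg2_def]; exact scstep hsc_ds_g1
    have hsc_ds_g3 : R.facePerm.SameCycle ds g3 := by rw [hg3_def]; exact scstep hsc_ds_g2
    have hg2f : g2.fst = g1.snd := by rw [hg2_def, R.fst_facePerm]
    have hg3f : g3.fst = g2.snd := by rw [hg3_def, R.fst_facePerm]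
    have hg3s : g3.snd = v := by
      have := R.fst_facePerm g3
      rw [h4, hdsf] at this
      exact this.symm
    by_cases ha2u : g2.snd = u
    · have : g3 = duv := dart_ext' ((hg3f.trans ha2u).trans hduvf.symm) (hg3s.trans hduvs.symm)
      rw [this] at hsc_ds_g3
      exact hnot1 hsc_ds_g3.symm
    by_cases ha2v : g2.snd = v
    · exact g3.fst_ne_snd ((hg3f.trans ha2v).trans hg3s.symm)
    by_cases ha2w : g2.snd = w
    · have : g3 = dwv := dart_ext' ((hg3f.trans ha2w).trans hdwvf.symm) (hg3s.trans hdwvs.symm)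
      rw [this] at hsc_ds_g3
      exact hnot2 (hsc_dvx_dwv.trans hsc_ds_g3.symm)
    by_cases ha2x : g2.snd = x
    · have adj_a1x : G.Adj g1.snd x := by
        have := g2.adj; rwa [hg2f, ha2x] at this
      exact no_c5 hC5 adj_u_a1 adj_a1x adj_xw adj_vw.symm adj_uv.symm
        h₃ h₂ ha1w ha1v (Ne.symm h₅)
    · have adj_a1a2 : G.Adj g1.snd g2.snd := by have := g2.adj; rwa [hg2f] at this
      have adj_a2v : G.Adj g2.snd v := by have := g3.adj; rwa [hg3f, hg3s] at this
      exact no_c5 hC5 adj_wu adj_u_a1 adj_a1a2 adj_a2v adj_vw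
        (Ne.symm ha1w) (Ne.symm ha2w) (Ne.symm ha2u) h₁ ha1v
  -- faceLen ds = 5
  · obtain ⟨g2, hg2_def⟩ : ∃ d, d = R.facePerm g1 := ⟨_, rfl⟩
    obtain ⟨g3, hg3_def⟩ : ∃ d, d = R.facePerm g2 := ⟨_, rfl⟩
    obtain ⟨g4, hg4_def⟩ : ∃ d, d = R.facePerm g3 := ⟨_, rfl⟩
    have h5 := R.pow_faceLen ds
    rw [hn, pow_five_apply, ← hg1_def, ← hg2_def, ← hg3_def, ← hg4_def] at h5
    have hsc_ds_g2 : R.facePerm.SameCycle ds g2 := by rw [hg2_def]; exact scstep hsc_ds_g1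
    have hsc_ds_g3 : R.facePerm.SameCycle ds g3 := by rw [hg3_def]; exact scstep hsc_ds_g2
    have hsc_ds_g4 : R.facePerm.SameCycle ds g4 := by rw [hg4_def]; exact scstep hsc_ds_g3
    have hg2f : g2.fst = g1.snd := by rw [hg2_def, R.fst_facePerm]
    have hg3f : g3.fst = g2.snd := by rw [hg3_def, R.fst_facePerm]
    have hg4f : g4.fst = g3.snd := by rw [hg4_def, R.fst_facePerm]
    have hg4s : g4.snd = v := by
      have := R.fst_facePerm g4
      rw [h5, hdsf] at this
      exact this.symm
    have adj_a1a2 : G.Adj g1.snd g2.snd := by have := g2.adj; rwa [hg2f] at this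
    by_cases ha2u : g2.snd = u
    · have : g2 = g1.symm := by
        apply SimpleGraph.Dart.ext
        rw [SimpleGraph.Dart.symm_toProd]
        exact Prod.ext (by rw [hg2f]; rfl) (by rw [ha2u, ← hg1f]; rfl)
      rw [hg2_def] at this
      exact R.facePerm_ne_symm hdeg g1 this
    by_cases ha2v : g2.snd = v
    · have adj_a1v : G.Adj g1.snd v := by rw [← ha2v]; exact adj_a1a2
      exact no_c5 hC5 adj_wu adj_u_a1 adj_a1v adj_vx adj_xw
        (Ne.symm ha1w) (Ne.symm h₄) h₁ h₃ ha1x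
    by_cases ha3a1 : g3.snd = g1.snd
    · have : g3 = g2.symm := by
        apply SimpleGraph.Dart.ext
        rw [SimpleGraph.Dart.symm_toProd]
        exact Prod.ext (by rw [hg3f]; rfl) (by rw [ha3a1, ← hg2f]; rfl)
      rw [hg3_def] at this
      exact R.facePerm_ne_symm hdeg g2 this
    by_cases ha3u : g3.snd = u
    · have : g4 = duv := dart_ext' ((hg4f.trans ha3u).trans hduvf.symm) (hg4s.trans hduvs.symm)
      rw [this] at hsc_ds_g4
      exact hnot1 hsc_ds_g4.symm
    by_cases ha3w : g3.snd = w
    · have : g4 = dwv := dart_ext' ((hg4f.trans ha3w).trans hdwvf.symm) (hg4s.trans hdwvs.symm)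
      rw [this] at hsc_ds_g4
      exact hnot2 (hsc_dvx_dwv.trans hsc_ds_g4.symm)
    · have adj_a2a3 : G.Adj g2.snd g3.snd := by have := g3.adj; rwa [hg3f] at this
      have adj_a3v : G.Adj g3.snd v := by have := g4.adj; rwa [hg4f, hg4s] at this
      exact no_c5 hC5 adj_uv.symm adj_u_a1 adj_a1a2 adj_a2a3 adj_a3v
        (Ne.symm ha1v) (Ne.symm ha2v) (Ne.symm ha2u) (Ne.symm ha3u) (Ne.symm ha3a1)

end PlanarTuran

namespace PlanarTuran

open SimpleGraph Equiv.Perm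

variable {V : Type*} [Fintype V] [DecidableEq V] {G : SimpleGraph V} [DecidableRel G.Adj]

lemma key (R : RotationSystem G)
    (hK4 : G.CliqueFree 4) (hC5 : G.CycleFree 5) (hdeg : ∀ v : V, 3 ≤ G.degree v)
    (B : Set (Sym2 V))
    (hBcl : ∀ e' ∈ B, ∀ e'', R.shares3Face e' e'' → e'' ∈ B)
    (hBface : ∀ e' ∈ B, ∃ d : G.Dart, d.edge = e' ∧ R.faceLen d = 3)
    (u v w x : V)
    (h₁ : u ≠ v) (h₂ : u ≠ w) (h₃ : u ≠ x) (h₄ : v ≠ w) (h₅ : v ≠ x) (h₆ : w ≠ x)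
    (hBeq : B = {s(u, v), s(u, w), s(v, w), s(v, x), s(w, x)}) :
    ∃ d : G.Dart, d.edge = s(u,v) ∧ 6 ≤ R.faceLen d := by
  have huvB : s(u, v) ∈ B := by rw [hBeq]; left; rfl
  obtain ⟨d0, hd0e, hd03⟩ := hBface _ huvB
  rcases (SimpleGraph.dart_edge_eq_mk'_iff).1 hd0e with h | h
  · exact key_oriented R hK4 hC5 hdeg B hBcl hBface u v w x h₁ h₂ h₃ h₄ h₅ h₆ hBeq d0 h hd03
  · have hm_cl : ∀ e' ∈ B, ∀ e'', (R.mirror).shares3Face e' e'' → e'' ∈ B :=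
      fun e' he e'' hsh => hBcl e' he e'' ((RotationSystem.mirror_shares3Face R e' e'').1 hsh)
    have hm_face : ∀ e' ∈ B, ∃ d : G.Dart, d.edge = e' ∧ (R.mirror).faceLen d = 3 := by
      intro e' he
      obtain ⟨d, hde, hd3⟩ := hBface e' he
      exact ⟨d.symm, by rw [SimpleGraph.Dart.edge_symm, hde],
        by rw [RotationSystem.mirror_faceLen, SimpleGraph.Dart.symm_symm]; exact hd3⟩
    have h0 : d0.symm.toProd = (u, v) := by
      rw [SimpleGraph.Dart.symm_toProd, h, Prod.swap_prod_mk]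
    have h03m : (R.mirror).faceLen d0.symm = 3 := by
      rw [RotationSystem.mirror_faceLen, SimpleGraph.Dart.symm_symm]; exact hd03
    obtain ⟨d, hde, hdlen⟩ := key_oriented (R.mirror) hK4 hC5 hdeg B hm_cl hm_face
      u v w x h₁ h₂ h₃ h₄ h₅ h₆ hBeq d0.symm h0 h03m
    rw [RotationSystem.mirror_faceLen] at hdlen
    exact ⟨d.symm, by rw [SimpleGraph.Dart.edge_symm, hde], hdlen⟩

end PlanarTuran

/-- In a plane graph with no `K₄` and no `C₅`, minimum degree at least `3`
and at least `5` vertices, if `B` is a triangular block isomorphic to `B₄` (triangles `uvw`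
and `vwx` sharing the edge `vw`), then each of the four boundary edges `uv, uw, vx, wx` is
incident in `G` to a face of length at least `6`, and consequently
`15 f(B) - 8 e(B) ≤ 15 (2 + 4/6) - 8 · 5 = 0`. -/
theorem b4_block_boundary_faces_and_discharging {V : Type*} [Fintype V] [DecidableEq V]
    (G : SimpleGraph V) [DecidableRel G.Adj]
    (R : PlanarTuran.RotationSystem G) (hplane : R.GenusZero)
    (hK4 : G.CliqueFree 4) (hC5 : G.CycleFree 5)
    (hdeg : ∀ v : V, 3 ≤ G.degree v) (hn5 : 5 ≤ Fintype.card V)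
    (B : Set (Sym2 V)) (hB : R.IsTriangularBlock B)
    (u v w x : V)
    (h₁ : u ≠ v) (h₂ : u ≠ w) (h₃ : u ≠ x) (h₄ : v ≠ w) (h₅ : v ≠ x) (h₆ : w ≠ x)
    (hBeq : B = {s(u, v), s(u, w), s(v, w), s(v, x), s(w, x)}) :
    (∀ e' ∈ ({s(u, v), s(u, w), s(v, x), s(w, x)} : Set (Sym2 V)),
      ∃ d : G.Dart, d.edge = e' ∧ 6 ≤ R.faceLen d) ∧
    15 * (∑ e ∈ B.toFinite.toFinset, R.fEdge e) - 8 * (B.ncard : ℚ) ≤ 0 ∧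
    (15 : ℚ) * (2 + 4 / 6) - 8 * 5 = 0 := by
  classical
  obtain ⟨e₀, he₀G, hBdef⟩ := hB
  have hBcl : ∀ e' ∈ B, ∀ e'', R.shares3Face e' e'' → e'' ∈ B := by
    intro e' he' e'' hsh
    rw [hBdef] at he' ⊢
    exact Relation.ReflTransGen.tail he' hsh
  have hBface : ∀ e' ∈ B, ∃ d : G.Dart, d.edge = e' ∧ R.faceLen d = 3 := by
    intro e' he'
    rw [hBdef] at he'
    have he'' : Relation.ReflTransGen R.shares3Face e₀ e' := he'
    rcases Relation.ReflTransGen.cases_tail he'' with heq | ⟨c, _, hsh⟩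
    · have hm1 : s(u,v) ∈ B := by rw [hBeq]; left; rfl
      have hm2 : s(v,w) ∈ B := by rw [hBeq]; right; right; left; rfl
      have hne : s(u,v) ≠ s(v,w) := by simp [Sym2.eq_iff, h₁, h₂]
      have hex : ∃ e₂ ∈ B, e₂ ≠ e' := by
        by_cases hh : s(u,v) = e'
        · exact ⟨s(v,w), hm2, fun hc => hne (hh.trans hc.symm)⟩
        · exact ⟨s(u,v), hm1, hh⟩
      obtain ⟨e₂, he₂, hne₂⟩ := hex
      rw [hBdef] at he₂
      rcases Relation.ReflTransGen.cases_head (he₂ : Relation.ReflTransGen _ e₀ e₂) with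
        heq2 | ⟨c, hsh, _⟩
      · exact absurd (heq2.symm.trans heq.symm) hne₂
      · obtain ⟨d₁, d₂, hd1, hd2, h3, hsc⟩ := hsh
        exact ⟨d₁, by rw [hd1, heq], h3⟩
    · obtain ⟨d₁, d₂, hd1, hd2, h3, hsc⟩ := hsh
      exact ⟨d₂, hd2, by rw [← R.faceLen_congr hsc]; exact h3⟩
  have hBeq2 : B = {s(u, w), s(u, v), s(w, v), s(w, x), s(v, x)} := by
    rw [hBeq, show s(w,v) = s(v,w) from Sym2.eq_swap]
    ext e
    simp only [Set.mem_insert_iff, Set.mem_singleton_iff]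
    tauto
  have hBeq3 : B = {s(x, v), s(x, w), s(v, w), s(v, u), s(w, u)} := by
    rw [hBeq, show s(x,v) = s(v,x) from Sym2.eq_swap, show s(x,w) = s(w,x) from Sym2.eq_swap,
      show s(v,u) = s(u,v) from Sym2.eq_swap, show s(w,u) = s(u,w) from Sym2.eq_swap]
    ext e
    simp only [Set.mem_insert_iff, Set.mem_singleton_iff]
    tauto
  have hBeq4 : B = {s(x, w), s(x, v), s(w, v), s(w, u), s(v, u)} := by
    rw [hBeq, show s(x,v) = s(v,x) from Sym2.eq_swap, show s(x,w) = s(w,x) from Sym2.eq_swap,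
      show s(v,u) = s(u,v) from Sym2.eq_swap, show s(w,u) = s(u,w) from Sym2.eq_swap,
      show s(w,v) = s(v,w) from Sym2.eq_swap]
    ext e
    simp only [Set.mem_insert_iff, Set.mem_singleton_iff]
    tauto
  have E1 := key R hK4 hC5 hdeg B hBcl hBface u v w x h₁ h₂ h₃ h₄ h₅ h₆ hBeq
  have E2 := key R hK4 hC5 hdeg B hBcl hBface u w v x h₂ h₁ h₃ (Ne.symm h₄) h₆ h₅ hBeq2
  have E3 := key R hK4 hC5 hdeg B hBcl hBface x v w u (Ne.symm h₅) (Ne.symm h₆) (Ne.symm h₃)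
    h₄ (Ne.symm h₁) (Ne.symm h₂) hBeq3
  have E4 := key R hK4 hC5 hdeg B hBcl hBface x w v u (Ne.symm h₆) (Ne.symm h₅) (Ne.symm h₃)
    (Ne.symm h₄) (Ne.symm h₂) (Ne.symm h₁) hBeq4
  have E3' : ∃ d : G.Dart, d.edge = s(v,x) ∧ 6 ≤ R.faceLen d := by
    obtain ⟨d, hd, h6⟩ := E3
    exact ⟨d, hd.trans Sym2.eq_swap, h6⟩
  have E4' : ∃ d : G.Dart, d.edge = s(w,x) ∧ 6 ≤ R.faceLen d := by
    obtain ⟨d, hd, h6⟩ := E4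
    exact ⟨d, hd.trans Sym2.eq_swap, h6⟩
  refine ⟨?_, ?_, by norm_num⟩
  · intro e' he'
    simp only [Set.mem_insert_iff, Set.mem_singleton_iff] at he'
    rcases he' with rfl | rfl | rfl | rfl
    exacts [E1, E2, E3', E4']
  · -- the discharging inequality
    have adj : ∀ a b : V, (∃ d : G.Dart, d.edge = s(a,b)) → G.Adj a b := by
      rintro a b ⟨d, hd⟩
      rcases (SimpleGraph.dart_edge_eq_mk'_iff).1 hd with h | h
      · have h1 : d.fst = a := by rw [show d.fst = d.toProd.1 from rfl, h]
        have h2 : d.snd = b := by rw [show d.snd = d.toProd.2 from rfl, h]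
        have := d.adj; rwa [h1, h2] at this
      · replace h : d.toProd = (b, a) := h.trans rfl
        have h1 : d.fst = b := by rw [show d.fst = d.toProd.1 from rfl, h]
        have h2 : d.snd = a := by rw [show d.snd = d.toProd.2 from rfl, h]
        have := d.adj; rw [h1, h2] at this; exact this.symm
    have adjB : ∀ a b : V, s(a,b) ∈ B → G.Adj a b := by
      intro a b hm
      obtain ⟨d, hd, _⟩ := hBface _ hm
      exact adj a b ⟨d, hd⟩
    have adj_uv : G.Adj u v := adjB u v (by rw [hBeq]; left; rfl)
    have adj_uw : G.Adj u w := adjB u w (by rw [hBeq]; right; left; rfl)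
    have adj_vw : G.Adj v w := adjB v w (by rw [hBeq]; right; right; left; rfl)
    have adj_vx : G.Adj v x := adjB v x (by rw [hBeq]; right; right; right; left; rfl)
    have adj_wx : G.Adj w x := adjB w x (by rw [hBeq]; right; right; right; right; rfl)
    have hb : ∀ d : G.Dart, (1:ℚ)/(R.faceLen d) ≤ 1/3 := by
      intro d
      have h3 := R.faceLen_ge_three hdeg d
      exact one_div_le_one_div_of_le (by norm_num) (by exact_mod_cast h3)
    have hb6 : ∀ d : G.Dart, 6 ≤ R.faceLen d → (1:ℚ)/(R.faceLen d) ≤ 1/6 := by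
      intro d h6
      exact one_div_le_one_div_of_le (by norm_num) (by exact_mod_cast h6)
    have hpair : ∀ a b (hab : G.Adj a b),
        (Finset.univ.filter (fun d : G.Dart => d.edge = s(a,b)))
          = {(⟨(a,b), hab⟩ : G.Dart), (⟨(b,a), hab.symm⟩ : G.Dart)} := by
      intro a b hab
      ext d
      simp [SimpleGraph.dart_edge_eq_mk'_iff, SimpleGraph.Dart.ext_iff]
    have hfE : ∀ a b (hab : G.Adj a b), R.fEdge s(a,b)
        = 1/(R.faceLen (⟨(a,b), hab⟩ : G.Dart)) + 1/(R.faceLen (⟨(b,a), hab.symm⟩ : G.Dart)) := by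
      intro a b hab
      rw [RotationSystem.fEdge, hpair a b hab, Finset.sum_pair]
      intro hc
      rw [SimpleGraph.Dart.ext_iff] at hc
      exact hab.ne (congrArg Prod.fst hc)
    have hbound : ∀ a b (hab : G.Adj a b),
        (∃ d : G.Dart, d.edge = s(a,b) ∧ 6 ≤ R.faceLen d) → R.fEdge s(a,b) ≤ 1/6 + 1/3 := by
      rintro a b hab ⟨d, hde, hd6⟩
      rw [hfE a b hab]
      rcases (SimpleGraph.dart_edge_eq_mk'_iff).1 hde with h | h
      · have hd : d = (⟨(a,b), hab⟩ : G.Dart) := SimpleGraph.Dart.ext _ _ h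
        rw [hd] at hd6
        exact add_le_add (hb6 _ hd6) (hb _)
      · replace h : d.toProd = (b, a) := h.trans rfl
        have hd : d = (⟨(b,a), hab.symm⟩ : G.Dart) := SimpleGraph.Dart.ext _ _ h
        rw [hd] at hd6
        have := add_le_add (hb (⟨(a,b), hab⟩ : G.Dart)) (hb6 _ hd6)
        linarith
    have t1 : R.fEdge s(u,v) ≤ 1/6 + 1/3 := hbound u v adj_uv E1
    have t2 : R.fEdge s(u,w) ≤ 1/6 + 1/3 := hbound u w adj_uw E2
    have t3 : R.fEdge s(v,x) ≤ 1/6 + 1/3 := hbound v x adj_vx E3'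
    have t4 : R.fEdge s(w,x) ≤ 1/6 + 1/3 := hbound w x adj_wx E4'
    have t5 : R.fEdge s(v,w) ≤ 1/3 + 1/3 := by
      rw [hfE v w adj_vw]
      exact add_le_add (hb _) (hb _)
    have hBfin : B.toFinite.toFinset
        = ({s(u,v), s(u,w), s(v,w), s(v,x), s(w,x)} : Finset (Sym2 V)) := by
      ext e
      rw [Set.Finite.mem_toFinset, hBeq]
      simp
    have hncard : B.ncard = 5 := by
      rw [Set.ncard_eq_toFinset_card B B.toFinite, hBfin]
      rw [Finset.card_insert_of_notMem (by
          simp [Sym2.eq_iff, h₁, h₂, h₃, h₄, h₅, h₆, Ne.symm h₁, Ne.symm h₂, Ne.symm h₃,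
            Ne.symm h₄, Ne.symm h₅, Ne.symm h₆]),
        Finset.card_insert_of_notMem (by
          simp [Sym2.eq_iff, h₁, h₂, h₃, h₄, h₅, h₆, Ne.symm h₁, Ne.symm h₂, Ne.symm h₃,
            Ne.symm h₄, Ne.symm h₅, Ne.symm h₆]),
        Finset.card_insert_of_notMem (by
          simp [Sym2.eq_iff, h₁, h₂, h₃, h₄, h₅, h₆, Ne.symm h₁, Ne.symm h₂, Ne.symm h₃,
            Ne.symm h₄, Ne.symm h₅, Ne.symm h₆]),
        Finset.card_insert_of_notMem (by
          simp [Sym2.eq_iff, h₁, h₂, h₃, h₄, h₅, h₆, Ne.symm h₁, Ne.symm h₂, Ne.symm h₃,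
            Ne.symm h₄, Ne.symm h₅, Ne.symm h₆]),
        Finset.card_singleton]
    have hsum : ∑ e ∈ B.toFinite.toFinset, R.fEdge e
        = R.fEdge s(u,v) + (R.fEdge s(u,w) + (R.fEdge s(v,w)
          + (R.fEdge s(v,x) + R.fEdge s(w,x)))) := by
      rw [hBfin]
      rw [Finset.sum_insert (by
          simp [Sym2.eq_iff, h₁, h₂, h₃, h₄, h₅, h₆, Ne.symm h₁, Ne.symm h₂, Ne.symm h₃,
            Ne.symm h₄, Ne.symm h₅, Ne.symm h₆]),
        Finset.sum_insert (by
          simp [Sym2.eq_iff, h₁, h₂, h₃, h₄, h₅, h₆, Ne.symm h₁, Ne.symm h₂, Ne.symm h₃,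
            Ne.symm h₄, Ne.symm h₅, Ne.symm h₆]),
        Finset.sum_insert (by
          simp [Sym2.eq_iff, h₁, h₂, h₃, h₄, h₅, h₆, Ne.symm h₁, Ne.symm h₂, Ne.symm h₃,
            Ne.symm h₄, Ne.symm h₅, Ne.symm h₆]),
        Finset.sum_insert (by
          simp [Sym2.eq_iff, h₁, h₂, h₃, h₄, h₅, h₆, Ne.symm h₁, Ne.symm h₂, Ne.symm h₃,
            Ne.symm h₄, Ne.symm h₅, Ne.symm h₆]),
        Finset.sum_singleton]
    rw [hsum, hncard]
    push_cast
    linarith
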